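/- Let p be prime. The map φ sending a multiset of points of PG(2,p) (with multiplicities in Z/pZ) to its power sum polynomial is surjective onto the space of homogeneous polynomials of degree p-1 in X,Y,Z over F_p; equivalently, the image of φ has F_p-dimension binomial(p+1,2). -/

import Mathlib

open MvPolynomial
open scoped LinearAlgebra.Projectivization

/-- The Rédei factor of a point of `PG(n,q)`. -/
noncomputable def redeiFactor {F : Type*} [Field F] {n : ℕ}
    (P : ℙ F (Fin n → F)) : MvPolynomial (Fin n) F :=
  ∑ i, C (P.rep i) * X i

/-- The power sum polynomial of a finite set of points of `PG(n,q)`. -/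
noncomputable def powerSum {F : Type*} [Field F] [Fintype F] {n : ℕ}
    (S : Finset (ℙ F (Fin n → F))) : MvPolynomial (Fin n) F :=
  ∑ P ∈ S, redeiFactor P ^ (Fintype.card F - 1)


/-- The power sum polynomial of a multiset of points of PG(2,q) with multiplicities
in ℤ/pℤ (p the characteristic of F). -/
noncomputable def mpowerSum (p : ℕ) {F : Type*} [Field F] [Fintype F] [CharP F p]
    [Fintype (ℙ F (Fin 3 → F))]
    (m : ℙ F (Fin 3 → F) → ZMod p) : MvPolynomial (Fin 3) F :=
  ∑ P : ℙ F (Fin 3 → F),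
    ZMod.castHom (dvd_refl p) F (m P) • (redeiFactor P ^ (Fintype.card F - 1))

section Aux
open Finset

variable (p : ℕ) [Fact p.Prime]


private lemma sum_pow_zmod (e : ℕ) :
    ∑ x : ZMod p, x ^ e = if e ≠ 0 ∧ (p - 1) ∣ e then -1 else 0 := by
  classical
  rcases eq_or_ne e 0 with rfl | he
  · simp [ZMod.natCast_self, Finset.card_univ, ZMod.card]
  · rw [← Finset.sum_erase (univ : Finset (ZMod p)) (f := fun x => x ^ e) (a := 0) (zero_pow he)]
    have himg : (univ : Finset (ZMod p)).erase 0
        = Finset.image (fun u : (ZMod p)ˣ => (u : ZMod p)) univ := by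
      ext x
      simp only [Finset.mem_erase, Finset.mem_univ, and_true, Finset.mem_image, true_and]
      constructor
      · intro hx; exact ⟨Units.mk0 x hx, rfl⟩
      · rintro ⟨u, rfl⟩; exact u.ne_zero
    rw [himg, Finset.sum_image (fun x _ y _ h => Units.ext h)]
    have := FiniteField.sum_pow_units (ZMod p) e
    beta_reduce
    rw [this, ZMod.card]
    simp [he]

private lemma key_identity (δ : Fin 3 → ℕ) (hδ : ∑ i, δ i = p - 1) :
    ∑ a : Fin 3 → ZMod p, (∏ i, a i ^ (p - 1 - δ i)) •
        ((∑ i, C (a i) * X i : MvPolynomial (Fin 3) (ZMod p)) ^ (p - 1))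
      = C (- (Nat.multinomial univ δ : ZMod p)) * ∏ i, X i ^ δ i := by
  classical
  have hp := (Fact.out : p.Prime)
  have hd : 1 ≤ p - 1 := le_tsub_of_add_le_left hp.two_le
  have hδle : ∀ i, δ i ≤ p - 1 := fun i =>
    hδ ▸ Finset.single_le_sum (f := δ) (fun _ _ => Nat.zero_le _) (mem_univ i)
  have expand : ∀ a : Fin 3 → ZMod p,
      ((∑ i, C (a i) * X i : MvPolynomial (Fin 3) (ZMod p)) ^ (p - 1))
      = ∑ k ∈ piAntidiag (univ : Finset (Fin 3)) (p - 1),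
          C ((Nat.multinomial univ k : ZMod p) * ∏ i, a i ^ k i) * ∏ i, X i ^ k i := by
    intro a
    rw [Finset.sum_pow_eq_sum_piAntidiag]
    refine Finset.sum_congr rfl fun k hk => ?_
    simp_rw [mul_pow, Finset.prod_mul_distrib, ← map_pow (C : ZMod p →+* _), ← map_prod,
      ← map_natCast (C : ZMod p →+* MvPolynomial (Fin 3) (ZMod p)), ← mul_assoc, ← C_mul]
  simp_rw [expand, Finset.smul_sum]
  rw [Finset.sum_comm]
  have inner : ∀ k ∈ piAntidiag (univ : Finset (Fin 3)) (p - 1),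
      ∑ a : Fin 3 → ZMod p, (∏ i, a i ^ (p - 1 - δ i)) •
          (C ((Nat.multinomial univ k : ZMod p) * ∏ i, a i ^ k i) * ∏ i, X i ^ k i)
      = C ((Nat.multinomial univ k : ZMod p) *
            ∏ i, ∑ x : ZMod p, x ^ (p - 1 - δ i + k i)) * ∏ i, X i ^ k i := by
    intro k hk
    simp_rw [smul_eq_C_mul, ← mul_assoc, ← C_mul, ← Finset.sum_mul, ← map_sum]
    congr 2
    rw [Fintype.prod_sum (f := fun (i : Fin 3) (x : ZMod p) => x ^ (p - 1 - δ i + k i)),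
      Finset.mul_sum]
    refine Finset.sum_congr rfl fun x _ => ?_
    rw [mul_left_comm, ← Finset.prod_mul_distrib]
    simp_rw [← pow_add]
  rw [Finset.sum_congr rfl inner]
  have hδmem : δ ∈ piAntidiag (univ : Finset (Fin 3)) (p - 1) := by
    rw [Finset.mem_piAntidiag]; exact ⟨hδ, fun i _ => mem_univ i⟩
  rw [Finset.sum_eq_single_of_mem δ hδmem ?_]
  · have hpows : ∀ i : Fin 3, p - 1 - δ i + δ i = p - 1 := fun i => Nat.sub_add_cancel (hδle i)
    simp_rw [hpows, sum_pow_zmod]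
    rw [if_pos ⟨by omega, dvd_rfl⟩, Fin.prod_univ_three]
    congr 2
    ring
  · intro k hk hkδ
    have hksum : ∑ i, k i = p - 1 := ((Finset.mem_piAntidiag).1 hk).1
    have hzero : ∏ i, ∑ x : ZMod p, x ^ (p - 1 - δ i + k i) = 0 := by
      by_contra hne
      have hall : ∀ i : Fin 3, p - 1 ≤ p - 1 - δ i + k i := by
        intro i
        have hfac : ∑ x : ZMod p, x ^ (p - 1 - δ i + k i) ≠ 0 :=
          fun h => hne (Finset.prod_eq_zero (mem_univ i) h)
        rw [sum_pow_zmod] at hfac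
        split_ifs at hfac with h
        · exact Nat.le_of_dvd (Nat.pos_of_ne_zero h.1) h.2
        · exact absurd rfl hfac
      apply hkδ
      have e0 := hall 0; have e1 := hall 1; have e2 := hall 2
      have d0 := hδle 0; have d1 := hδle 1; have d2 := hδle 2
      rw [Fin.sum_univ_three] at hksum hδ
      have h3 : k 0 = δ 0 ∧ k 1 = δ 1 ∧ k 2 = δ 2 := by omega
      funext i
      fin_cases i
      · exact h3.1
      · exact h3.2.1
      · exact h3.2.2
    rw [hzero, mul_zero, map_zero, zero_mul]

private lemma redei_pow_mem (a : Fin 3 → ZMod p) :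
    ((∑ i, C (a i) * X i : MvPolynomial (Fin 3) (ZMod p)) ^ (p - 1)) ∈
      Submodule.span (ZMod p)
        (Set.range fun P : ℙ (ZMod p) (Fin 3 → ZMod p) => redeiFactor P ^ (p - 1)) := by
  have hp := (Fact.out : p.Prime)
  rcases eq_or_ne a 0 with rfl | ha
  · have : (∑ i, C ((0 : Fin 3 → ZMod p) i) * X i : MvPolynomial (Fin 3) (ZMod p)) = 0 := by
      simp
    rw [this, zero_pow (by have := hp.two_le; omega : p - 1 ≠ 0)]
    exact Submodule.zero_mem _
  · set P := Projectivization.mk (ZMod p) a ha with hP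
    obtain ⟨c, hc⟩ := (Projectivization.mk_eq_mk_iff (ZMod p) a P.rep ha P.rep_nonzero).1
      (Projectivization.mk_rep P).symm
    have hLa : (∑ i, C (a i) * X i : MvPolynomial (Fin 3) (ZMod p))
        = C (c : ZMod p) * redeiFactor P := by
      rw [redeiFactor, Finset.mul_sum]
      refine Finset.sum_congr rfl fun i _ => ?_
      rw [← hc]
      simp [Pi.smul_apply, Units.smul_def, C_mul, mul_assoc]
    rw [hLa, mul_pow, ← map_pow, ZMod.pow_card_sub_one_eq_one (Units.ne_zero c), map_one, one_mul]
    exact Submodule.subset_span ⟨P, rfl⟩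

private lemma monomial_mem (δ : Fin 3 → ℕ) (hδ : ∑ i, δ i = p - 1) :
    (∏ i, (X i : MvPolynomial (Fin 3) (ZMod p)) ^ δ i) ∈
      Submodule.span (ZMod p)
        (Set.range fun P : ℙ (ZMod p) (Fin 3 → ZMod p) => redeiFactor P ^ (p - 1)) := by
  have hp := (Fact.out : p.Prime)
  set m : ZMod p := (Nat.multinomial univ δ : ZMod p) with hm
  have hmne : -m ≠ 0 := by
    rw [neg_ne_zero, hm, Ne, ZMod.natCast_eq_zero_iff]
    intro hdvd
    have hdd : Nat.multinomial univ δ ∣ Nat.factorial (p - 1) := by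
      rw [← hδ]; exact Dvd.intro_left _ (Nat.multinomial_spec _ _)
    have := (Nat.Prime.dvd_factorial hp).1 (hdvd.trans hdd)
    have h2 := hp.two_le
    omega
  have hkey := key_identity p δ hδ
  have hmem : C (-m) * ∏ i, (X i : MvPolynomial (Fin 3) (ZMod p)) ^ δ i ∈
      Submodule.span (ZMod p)
        (Set.range fun P : ℙ (ZMod p) (Fin 3 → ZMod p) => redeiFactor P ^ (p - 1)) := by
    rw [← hkey]
    exact Submodule.sum_mem _ fun a _ => Submodule.smul_mem _ _ (redei_pow_mem p a)
  have := Submodule.smul_mem _ ((-m)⁻¹) hmem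
  rwa [smul_eq_C_mul, ← mul_assoc, ← C_mul, inv_mul_cancel₀ hmne, C_1, one_mul] at this

end Aux

/-- For q = p prime, the map from multisets of points of PG(2,p) (multiplicities mod p)
to power sum polynomials is surjective onto the homogeneous polynomials of degree p-1. -/
theorem mpowerSum_surjective (p : ℕ) [Fact p.Prime]
    [Fintype (ℙ (ZMod p) (Fin 3 → ZMod p))]
    (G : MvPolynomial (Fin 3) (ZMod p)) (hG : G.IsHomogeneous (p - 1)) :
    ∃ m : ℙ (ZMod p) (Fin 3 → ZMod p) → ZMod p, mpowerSum p m = G := by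
  classical
  have hmem : G ∈ Submodule.span (ZMod p)
      (Set.range fun P : ℙ (ZMod p) (Fin 3 → ZMod p) => redeiFactor P ^ (p - 1)) := by
    rw [← MvPolynomial.support_sum_monomial_coeff G]
    refine Submodule.sum_mem _ fun δ hδs => ?_
    have hc : coeff δ G ≠ 0 := mem_support_iff.1 hδs
    have hdeg : ∑ i, δ i = p - 1 := by
      have h1 := hG hc
      change Finsupp.weight (fun _ => 1) δ = p - 1 at h1
      rw [← Finsupp.degree_eq_weight_one] at h1
      rw [← h1, Finsupp.degree]
      exact (Finset.sum_subset (Finset.subset_univ _)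
        (fun i _ hi => Finsupp.notMem_support_iff.1 hi)).symm
    have hmono : (monomial δ) (coeff δ G)
        = (coeff δ G) • ∏ i, (X i : MvPolynomial (Fin 3) (ZMod p)) ^ δ i := by
      rw [smul_eq_C_mul, monomial_eq, Finsupp.prod_pow]
    rw [hmono]
    exact Submodule.smul_mem _ _ (monomial_mem p δ hdeg)
  obtain ⟨m, hm⟩ := (Submodule.mem_span_range_iff_exists_fun (ZMod p)).1 hmem
  refine ⟨m, ?_⟩
  simp only [mpowerSum, ZMod.castHom_apply, ZMod.cast_id', id_eq, ZMod.card]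
  exact hm
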